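/- Let ρ be a finite positive Borel measure on the unit circle 𝕋, α ∈ ℝ, u(z) = iα + ∫_𝕋 (ζ+z)/(ζ−z) dρ(ζ) for z ∈ 𝔻, and for t > 1 let Φ_t(z) = z·exp((t−1)u(z)). If z ∈ 𝔻 satisfies |Φ_t(z)| < 1, then |Φ_t(sz)| < 1 for every s ∈ (0,1]; that is, the line segment joining the origin to z is contained in Ω_t = {w ∈ 𝔻 : |Φ_t(w)| < 1}. -/

import Mathlib

open MeasureTheory Filter

/-- u(z) = iα + ∫_𝕋 (ζ+z)/(ζ−z) dρ(ζ). -/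
noncomputable def uT (ρ : Measure ℂ) (α : ℝ) (z : ℂ) : ℂ :=
  Complex.I * (α : ℂ) + ∫ ζ : ℂ, (ζ + z) / (ζ - z) ∂ρ

/-- Φ_t(z) = z·exp((t−1)·u(z)). -/
noncomputable def PhiT (ρ : Measure ℂ) (α t : ℝ) (z : ℂ) : ℂ :=
  z * Complex.exp (((t : ℂ) - 1) * uT ρ α z)

/-- `2 r (-log r) ≤ 1 - r²` on `(0,1]`. -/
lemma logr_bound {r : ℝ} (h0 : 0 < r) (h1 : r ≤ 1) : 2*r*(-Real.log r) ≤ 1 - r^2 := by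
  set f : ℝ → ℝ := fun x => Real.log x - x/2 + (2*x)⁻¹ with hf
  have hder : ∀ x ∈ Set.Ioo r 1, HasDerivAt f (x⁻¹ - 1/2 + (-2/(2*x)^2)) x := by
    intro x hx
    have hx0 : x ≠ 0 := by nlinarith [hx.1]
    exact ((Real.hasDerivAt_log hx0).sub ((hasDerivAt_id x).div_const 2)).add
      (by have h := ((hasDerivAt_id x).const_mul 2).inv (by simpa using hx0); simp only [id_eq, mul_one] at h; exact h)
  have hmono : AntitoneOn f (Set.Icc r 1) := by
    apply antitoneOn_of_deriv_nonpos (convex_Icc r 1)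
    · apply ContinuousOn.add (ContinuousOn.sub ?_ ?_) ?_
      · exact Real.continuousOn_log.mono (by intro x hx; simp; nlinarith [hx.1])
      · fun_prop
      · apply ContinuousOn.inv₀ (by fun_prop)
        intro x hx; nlinarith [hx.1]
    · rw [interior_Icc]
      intro x hx
      exact (hder x hx).differentiableAt.differentiableWithinAt
    · rw [interior_Icc]
      intro x hx
      rw [(hder x hx).deriv]
      have hx0 : 0 < x := lt_trans h0 hx.1
      have : x⁻¹ - 1/2 + (-2/(2*x)^2) = -(x-1)^2/(2*x^2) := by field_simp; ring
      rw [this]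
      apply div_nonpos_of_nonpos_of_nonneg <;> nlinarith [sq_nonneg (x-1)]
  have h := hmono (Set.left_mem_Icc.mpr h1) (Set.right_mem_Icc.mpr h1) h1
  have key : 0 ≤ Real.log r - r/2 + (2*r)⁻¹ := by
    have h1' : f 1 = 0 := by norm_num [hf]
    rw [h1'] at h; exact h
  have h2r : (0:ℝ) < 2*r := by linarith
  nlinarith [mul_nonneg (le_of_lt h2r) key, mul_inv_cancel₀ (ne_of_gt h2r)]

/-- `2 (1-s) ≤ (-log s)(1+s)` on `(0,1]`. -/
lemma logs_bound {s : ℝ} (h0 : 0 < s) (h1 : s ≤ 1) : 2*(1-s) ≤ (-Real.log s) * (1+s) := by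
  set f : ℝ → ℝ := fun x => -Real.log x - 4*(1+x)⁻¹ + 2 with hf
  have hder : ∀ x ∈ Set.Ioo s 1, HasDerivAt f (-x⁻¹ - 4*(-1/(1+x)^2)) x := by
    intro x hx
    have hx0 : x ≠ 0 := by nlinarith [hx.1]
    have hx1 : (1:ℝ) + x ≠ 0 := by nlinarith [hx.1]
    exact ((Real.hasDerivAt_log hx0).neg.sub
      (by simpa using (((hasDerivAt_id x).const_add 1).inv hx1).const_mul 4)).add_const 2
  have hmono : AntitoneOn f (Set.Icc s 1) := by
    apply antitoneOn_of_deriv_nonpos (convex_Icc s 1)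
    · apply ContinuousOn.add (ContinuousOn.sub ?_ ?_) continuousOn_const
      · exact (Real.continuousOn_log.mono (by intro x hx; simp; nlinarith [hx.1])).neg
      · apply ContinuousOn.mul continuousOn_const
        apply ContinuousOn.inv₀ (by fun_prop)
        intro x hx; nlinarith [hx.1]
    · rw [interior_Icc]
      intro x hx
      exact (hder x hx).differentiableAt.differentiableWithinAt
    · rw [interior_Icc]
      intro x hx
      rw [(hder x hx).deriv]
      have hx0 : 0 < x := lt_trans h0 hx.1
      have : -x⁻¹ - 4*(-1/(1+x)^2) = -(1-x)^2/(x*(1+x)^2) := by field_simp; ring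
      rw [this]
      apply div_nonpos_of_nonpos_of_nonneg <;> nlinarith [sq_nonneg (1-x)]
  have h := hmono (Set.left_mem_Icc.mpr h1) (Set.right_mem_Icc.mpr h1) h1
  have key : 0 ≤ -Real.log s - 4*(1+s)⁻¹ + 2 := by
    have h1' : f 1 = 0 := by norm_num [hf]
    rw [h1'] at h; exact h
  have h1s : (0:ℝ) < 1+s := by linarith
  nlinarith [mul_nonneg (le_of_lt h1s) key, mul_inv_cancel₀ (ne_of_gt h1s)]

/-- Real part of the Herglotz kernel, for `ζ` on the unit circle. -/
lemma re_kernel (ζ w : ℂ) (hζ : ‖ζ‖ = 1) :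
    ((ζ + w) / (ζ - w)).re = (1 - Complex.normSq w) / Complex.normSq (ζ - w) := by
  have h1 : Complex.normSq ζ = 1 := by
    rw [← Complex.sq_norm, hζ]; norm_num
  rw [Complex.div_re, ← add_div]
  congr 1
  simp only [Complex.add_re, Complex.add_im, Complex.sub_re, Complex.sub_im,
    Complex.normSq_apply] at h1 ⊢
  linear_combination h1

/-- Real form of the Harnack-type estimate along a ray. -/
lemma harnack_real {s r x A B : ℝ} (hs0 : 0 < s) (hs1 : s ≤ 1) (hr0 : 0 ≤ r) (hr1 : r < 1)
    (hxr : -r ≤ x) (hA : A = 1 + s^2*r^2 - 2*s*x) (hB : B = 1 + r^2 - 2*x)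
    (hA0 : 0 < A) (hB0 : 0 < B) :
    (1 - s^2*r^2)/A ≤ (1+r)*(1-s*r)/((1-r)*(1+s*r)) * ((1-r^2)/B) := by
  have key : (1 + s*r)^2 * B ≤ (1 + r)^2 * A := by
    rw [hA, hB]
    nlinarith [mul_nonneg (mul_nonneg (by linarith : (0:ℝ) ≤ x + r) (by linarith : (0:ℝ) ≤ 1 - s))
      (by nlinarith : (0:ℝ) ≤ 1 - s*r^2)]
  have hsr1 : s*r < 1 := by nlinarith
  rw [div_mul_div_comm, div_le_div_iff₀ hA0 (mul_pos (mul_pos (by linarith) (by nlinarith)) hB0)]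
  nlinarith [mul_le_mul_of_nonneg_left key (by nlinarith : (0:ℝ) ≤ (1 - s*r)*(1 - r))]

/-- Pointwise Harnack inequality for the Herglotz kernel along the ray `s ↦ s z`. -/
lemma harnack_pt {s : ℝ} (hs0 : 0 < s) (hs1 : s ≤ 1) (z ζ : ℂ)
    (hz1 : ‖z‖ < 1) (hζ : ‖ζ‖ = 1) :
    ((ζ + (s:ℂ)*z) / (ζ - (s:ℂ)*z)).re ≤
      ((1 + ‖z‖)*(1 - s*‖z‖)/((1 - ‖z‖)*(1 + s*‖z‖)))
        * ((ζ + z) / (ζ - z)).re := by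
  set r := ‖z‖ with hrdef
  have hr0 : 0 ≤ r := norm_nonneg z
  rw [re_kernel _ _ hζ, re_kernel _ _ hζ]
  have hsz : ‖(s:ℂ)*z‖ = s*r := by
    simp [abs_of_pos hs0, hrdef]
  have hA0 : 0 < Complex.normSq (ζ - (s:ℂ)*z) := by
    rw [Complex.normSq_pos, sub_ne_zero]
    intro h
    rw [← h, hζ] at hsz
    nlinarith
  have hB0 : 0 < Complex.normSq (ζ - z) := by
    rw [Complex.normSq_pos, sub_ne_zero]
    intro h
    rw [← h, hζ] at hrdef
    nlinarith
  have hNz : Complex.normSq z = r^2 := by rw [hrdef, Complex.sq_norm]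
  have hNζr : ζ.re*ζ.re + ζ.im*ζ.im = 1 := by
    have : Complex.normSq ζ = 1 := by rw [← Complex.sq_norm, hζ]; norm_num
    simpa [Complex.normSq_apply] using this
  have hNzr : z.re*z.re + z.im*z.im = r^2 := by
    simpa [Complex.normSq_apply] using hNz
  have hNsz : Complex.normSq ((s:ℂ)*z) = s^2*r^2 := by
    rw [Complex.normSq_mul, hNz, Complex.normSq_ofReal]; ring
  rw [hNsz, hNz]
  have hxr : -r ≤ ζ.re*z.re + ζ.im*z.im := by
    nlinarith [sq_nonneg (ζ.re*z.im - ζ.im*z.re), sq_nonneg (ζ.re*z.re + ζ.im*z.im + r)]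
  refine harnack_real hs0 hs1 hr0 hz1 hxr ?_ ?_ hA0 hB0
  · simp only [Complex.normSq_apply, Complex.sub_re, Complex.sub_im, Complex.mul_re,
      Complex.mul_im, Complex.ofReal_re, Complex.ofReal_im]
    linear_combination hNζr + s^2 * hNzr
  · simp only [Complex.normSq_apply, Complex.sub_re, Complex.sub_im]
    linear_combination hNζr + hNzr

theorem stmt17 (ρ : Measure ℂ) [IsFiniteMeasure ρ]
    (hρ : ρ {z : ℂ | ‖z‖ = 1}ᶜ = 0)
    (α t : ℝ) (ht : 1 < t)
    (z : ℂ) (hz : ‖z‖ < 1) (hΦ : ‖PhiT ρ α t z‖ < 1)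
    (s : ℝ) (hs : s ∈ Set.Ioc (0 : ℝ) 1) :
    ‖PhiT ρ α t ((s : ℂ) * z)‖ < 1 := by
  obtain ⟨hs0, hs1⟩ := hs
  have hae : ∀ᵐ ζ ∂ρ, ‖ζ‖ = 1 := by
    rw [ae_iff]
    simpa [Set.compl_setOf] using hρ
  by_cases hz0 : z = 0
  · simp [PhiT, hz0]
  -- basic data
  set r := ‖z‖ with hrdef
  have hr0 : 0 < r := norm_pos_iff.mpr hz0
  have hr1 : r < 1 := hz
  have hsz : ‖(s:ℂ)*z‖ = s*r := by
    simp [abs_of_pos hs0, hrdef]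
  have hsz1 : ‖(s:ℂ)*z‖ < 1 := by
    rw [hsz]; nlinarith
  -- integrability of the kernel
  have hint : ∀ w : ℂ, ‖w‖ < 1 → Integrable (fun ζ => (ζ + w) / (ζ - w)) ρ := by
    intro w hw
    refine Integrable.mono' (integrable_const ((1 + ‖w‖)/(1 - ‖w‖)))
      ((measurable_id.add_const w).div (measurable_id.sub_const w)).aestronglyMeasurable ?_
    filter_upwards [hae] with ζ hζ
    rw [norm_div]
    have h1 : ‖ζ + w‖ ≤ 1 + ‖w‖ := by
      calc ‖ζ + w‖ ≤ ‖ζ‖ + ‖w‖ := norm_add_le _ _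
      _ = 1 + ‖w‖ := by rw [hζ]
    have h2 : 1 - ‖w‖ ≤ ‖ζ - w‖ := by
      calc 1 - ‖w‖ = ‖ζ‖ - ‖w‖ := by rw [hζ]
      _ ≤ ‖ζ - w‖ := norm_sub_norm_le _ _
    have h3 : (0:ℝ) < 1 - ‖w‖ := by linarith
    exact div_le_div₀ (by positivity) h1 h3 h2
  have hint' : ∀ w : ℂ, ‖w‖ < 1 → Integrable (fun ζ => ((ζ + w) / (ζ - w)).re) ρ := by
    intro w hw
    have := (hint w hw).re
    simpa [RCLike.re_to_complex] using this
  -- modulus formula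
  have habs : ∀ w : ℂ, ‖w‖ < 1 → ‖PhiT ρ α t w‖
      = ‖w‖ * Real.exp ((t-1) * ∫ ζ, ((ζ + w) / (ζ - w)).re ∂ρ) := by
    intro w hw
    have hre : (uT ρ α w).re = ∫ ζ, ((ζ + w) / (ζ - w)).re ∂ρ := by
      rw [uT, Complex.add_re]
      have h0 : (Complex.I * (α:ℂ)).re = 0 := by simp
      rw [h0, zero_add]
      have := integral_re (μ := ρ) (f := fun ζ => (ζ + w) / (ζ - w)) (hint w hw)
      simpa [RCLike.re_to_complex] using this.symm
    rw [PhiT, norm_mul, Complex.norm_exp]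
    congr 1
    have h1 : ((t:ℂ) - 1) = ((t - 1 : ℝ) : ℂ) := by push_cast; ring
    rw [h1, Complex.re_ofReal_mul, hre]
  set c := t - 1 with hc
  have hc0 : 0 < c := by simp [hc]; linarith
  set V := ∫ ζ, ((ζ + z) / (ζ - z)).re ∂ρ with hV
  set Vs := ∫ ζ, ((ζ + (s:ℂ)*z) / (ζ - (s:ℂ)*z)).re ∂ρ with hVs
  set K := (1 + r)*(1 - s*r)/((1 - r)*(1 + s*r)) with hK
  have hD0 : (0:ℝ) < (1 - r)*(1 + s*r) := mul_pos (by linarith) (by positivity)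
  have hK0 : 0 < K := by
    rw [hK]
    exact div_pos (mul_pos (by linarith) (by nlinarith)) hD0
  -- Harnack for the integrals
  have hVsK : Vs ≤ K * V := by
    have hmono : (fun ζ => ((ζ + (s:ℂ)*z) / (ζ - (s:ℂ)*z)).re)
        ≤ᵐ[ρ] fun ζ => K * ((ζ + z) / (ζ - z)).re := by
      filter_upwards [hae] with ζ hζ
      exact harnack_pt hs0 hs1 z ζ hz hζ
    calc Vs ≤ ∫ ζ, K * ((ζ + z) / (ζ - z)).re ∂ρ :=
          integral_mono_ae (hint' _ hsz1) ((hint' z hz).const_mul K) hmono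
    _ = K * V := by rw [integral_const_mul]
  have hVnn : 0 ≤ V := by
    apply integral_nonneg_of_ae
    filter_upwards [hae] with ζ hζ
    rw [re_kernel _ _ hζ]
    apply div_nonneg ?_ (Complex.normSq_nonneg _)
    have : Complex.normSq z = r^2 := by rw [hrdef, Complex.sq_norm]
    nlinarith
  -- rewrite hypothesis and goal
  rw [habs z hz, ← hrdef, ← hV] at hΦ
  rw [habs _ hsz1, hsz, ← hVs]
  -- logarithms
  have hLlt : c * V < -Real.log r := by
    have h1 : Real.exp (c*V) < 1/r := by
      rw [lt_div_iff₀ hr0]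
      linarith [hΦ, mul_comm r (Real.exp (c*V))]
    calc c*V = Real.log (Real.exp (c*V)) := (Real.log_exp _).symm
    _ < Real.log (1/r) := Real.log_lt_log (Real.exp_pos _) h1
    _ = -Real.log r := by rw [one_div, Real.log_inv]
  set L := -Real.log r with hL
  set M := -Real.log s with hM
  have hLnn : 0 ≤ L := by
    rw [hL]
    exact neg_nonneg.mpr (Real.log_nonpos (le_of_lt hr0) (le_of_lt hr1))
  have hMnn : 0 ≤ M := by
    rw [hM]
    exact neg_nonneg.mpr (Real.log_nonpos (le_of_lt hs0) hs1)
  have hA : 2*r*L ≤ 1 - r^2 := by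
    have := logr_bound hr0 (le_of_lt hr1); rw [← hL] at this; exact this
  have hB : 2*(1-s) ≤ M * (1+s) := by
    have := logs_bound hs0 hs1; rw [← hM] at this; exact this
  have hKD : K * ((1 - r)*(1 + s*r)) = (1 + r)*(1 - s*r) := by
    rw [hK]; exact div_mul_cancel₀ _ (ne_of_gt hD0)
  have hlogs : Real.log s = -M := by rw [hM]; ring
  have hlogr : Real.log r = -L := by rw [hL]; ring
  clear_value V Vs K c L M
  clear hV hVs hK hL hM hc
  -- the key elementary inequality : K*L ≤ M + L
  have hKL : K * L ≤ M + L := by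
    have hMD : (1-s)*(1-r^2) ≤ M*((1-r)*(1+s*r)) := by
      nlinarith [mul_le_mul_of_nonneg_left hB (le_of_lt hD0), sq_nonneg ((1-s)*(1-r))]
    have h2r : 2*r*(1-s)*L ≤ (1-s)*(1-r^2) := by
      nlinarith [mul_le_mul_of_nonneg_left hA (by linarith : (0:ℝ) ≤ 1-s)]
    have e1 : K*L*((1-r)*(1+s*r)) = (1+r)*(1-s*r)*L := by linear_combination L * hKD
    have hfin : (K*L)*((1-r)*(1+s*r)) ≤ (M+L)*((1-r)*(1+s*r)) := by
      nlinarith [e1, hMD, h2r]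
    exact le_of_mul_le_mul_right hfin hD0
  -- conclude
  have hcVs : c * Vs < M + L := by
    have h1 : c * Vs ≤ c * (K * V) := mul_le_mul_of_nonneg_left hVsK (le_of_lt hc0)
    have h2 : K * (c * V) < K * L := mul_lt_mul_of_pos_left hLlt hK0
    calc c * Vs ≤ c * (K * V) := h1
    _ = K * (c * V) := by ring
    _ < K * L := h2
    _ ≤ M + L := hKL
  have hsr0 : (0:ℝ) < s*r := mul_pos hs0 hr0
  calc s*r*Real.exp (c*Vs) = Real.exp (Real.log (s*r) + c*Vs) := by
        rw [Real.exp_add, Real.exp_log hsr0]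
  _ < 1 := by
        rw [Real.exp_lt_one_iff, Real.log_mul (ne_of_gt hs0) (ne_of_gt hr0), hlogs, hlogr]
        linarith
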